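/- Let q be a prime power, m ≥ 1, r = q^m, γ a primitive element of GF(r²). Let d = s(r-1) + Δ and d' = s'(r-1) + Δ with gcd(Δ, (r-1)/(q-1)) = 1. Then γ^{-d} and γ^{-d'} have the same minimal polynomial over GF(q) if and only if s ≡ s' (mod r+1) or s + s' ≡ Δ (mod r+1). -/

import Mathlib

open Polynomial

/-- The `q`-power Frobenius as a `K`-algebra equivalence of `L`. -/
noncomputable def frobAlgEquiv (K L : Type) [Field K] [Field L] [Fintype K] [Fintype L]
    [Algebra K L] : L ≃ₐ[K] L := by
  haveI : Fact (Nat.Prime (ringChar K)) := ⟨CharP.char_is_prime K (ringChar K)⟩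
  haveI : CharP L (ringChar K) := charP_of_injective_algebraMap (algebraMap K L).injective _
  refine AlgEquiv.ofBijective
    { toFun := fun z => z ^ Fintype.card K
      map_one' := one_pow _
      map_mul' := fun a b => mul_pow a b _
      map_zero' := zero_pow Fintype.card_ne_zero
      map_add' := fun a b => by
        obtain ⟨n, hp, hcard⟩ := FiniteField.card K (ringChar K)
        simp only [hcard, add_pow_char_pow]
      commutes' := fun a => by simp only [← map_pow, FiniteField.pow_card] } ?_
  refine Finite.injective_iff_bijective.mp fun a b h => ?_
  obtain ⟨n, hp, hcard⟩ := FiniteField.card K (ringChar K)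
  have h0 : (a - b) ^ Fintype.card K = 0 := by
    rw [hcard, sub_pow_char_pow, ← hcard]
    simpa using sub_eq_zero_of_eq h
  exact sub_eq_zero.mp (pow_eq_zero_iff Fintype.card_ne_zero |>.mp h0)

lemma frobAlgEquiv_apply (K L : Type) [Field K] [Field L] [Fintype K] [Fintype L]
    [Algebra K L] (z : L) : (frobAlgEquiv K L) z = z ^ Fintype.card K := by
  simp [frobAlgEquiv]

lemma frobAlgEquiv_pow_apply (K L : Type) [Field K] [Field L] [Fintype K] [Fintype L]
    [Algebra K L] (k : ℕ) : ∀ z : L, ((frobAlgEquiv K L) ^ k) z = z ^ (Fintype.card K) ^ k := by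
  induction k with
  | zero => simp
  | succ n ih =>
    intro z
    rw [pow_succ', AlgEquiv.mul_apply, ih, frobAlgEquiv_apply, ← pow_mul, ← pow_succ]

lemma frob_zpowers_top (K L : Type) [Field K] [Field L] [Fintype K] [Fintype L]
    [Algebra K L] : Subgroup.zpowers (frobAlgEquiv K L) = ⊤ := by
  have hq : 1 < Fintype.card K := Fintype.one_lt_card
  have hfin : Fintype.card L = Fintype.card K ^ Module.finrank K L := Module.card_eq_pow_finrank
  have hn : 0 < Module.finrank K L := Module.finrank_pos
  apply Subgroup.eq_top_of_card_eq
  rw [Nat.card_zpowers]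
  have hcardG : Nat.card (L ≃ₐ[K] L) = Module.finrank K L := by
    have := IsGalois.card_aut_eq_finrank K L
    exact this
  rw [hcardG]
  classical
  have hdvd : orderOf (frobAlgEquiv K L) ∣ Module.finrank K L := by
    rw [← hcardG]; exact orderOf_dvd_natCard _
  have hpos : 0 < orderOf (frobAlgEquiv K L) := by
    haveI : Finite (L ≃ₐ[K] L) := Nat.finite_of_card_ne_zero (by omega)
    exact orderOf_pos _
  have hle : Module.finrank K L ≤ orderOf (frobAlgEquiv K L) := by
    set t := orderOf (frobAlgEquiv K L) with ht
    have hroot : ∀ z : L, z ^ (Fintype.card K) ^ t = z := by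
      intro z
      have h1 := frobAlgEquiv_pow_apply K L t z
      have h2 : (frobAlgEquiv K L) ^ t = 1 := pow_orderOf_eq_one _
      rw [h2] at h1
      simpa using h1.symm
    have ha2 : 1 < (Fintype.card K) ^ t := one_lt_pow₀ hq hpos.ne'
    set P : L[X] := X ^ (Fintype.card K) ^ t - X with hP
    have hdeg : P.natDegree = (Fintype.card K) ^ t := by
      rw [hP, natDegree_sub_eq_left_of_natDegree_lt] <;> simp [ha2]
    have hPne : P ≠ 0 := fun h => by rw [h] at hdeg; simp at hdeg; omega
    have hsub : (Finset.univ : Finset L) ⊆ P.roots.toFinset := fun z _ => by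
      simp only [Multiset.mem_toFinset, mem_roots hPne, IsRoot, hP]
      simp [hroot z]
      rw [← hP]; exact hPne
    have h2 := Finset.card_le_card hsub
    rw [Finset.card_univ] at h2
    have h3 : P.roots.toFinset.card ≤ P.roots.card := Multiset.toFinset_card_le _
    have h4 : P.roots.card ≤ P.natDegree := (card_roots' P)
    have h5 : Fintype.card L ≤ (Fintype.card K) ^ t := by omega
    rw [hfin] at h5
    exact (pow_le_pow_iff_right₀ hq).mp h5
  exact le_antisymm (Nat.le_of_dvd hn hdvd) hle

lemma minpoly_eq_iff_pow (K L : Type) [Field K] [Field L] [Fintype K] [Fintype L]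
    [Algebra K L] (x y : L) :
    minpoly K x = minpoly K y ↔ ∃ k : ℕ, x = y ^ (Fintype.card K) ^ k := by
  constructor
  · intro h
    rw [Normal.minpoly_eq_iff_mem_orbit] at h
    obtain ⟨σ, hσ⟩ := h
    have hσ' : σ y = x := hσ
    have hmem : σ ∈ Subgroup.zpowers (frobAlgEquiv K L) := by
      rw [frob_zpowers_top]; trivial
    rw [← mem_powers_iff_mem_zpowers] at hmem
    obtain ⟨k, hk⟩ := hmem
    have hk' : (frobAlgEquiv K L) ^ k = σ := hk
    exact ⟨k, by rw [← hσ', ← hk', frobAlgEquiv_pow_apply]⟩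
  · rintro ⟨k, rfl⟩
    rw [← frobAlgEquiv_pow_apply]
    exact minpoly.algEquiv_eq _ y

open Finset

lemma numth (q m r : ℕ) (hq2 : 2 ≤ q) (hm : 1 ≤ m) (hr : (r:ℤ) = (q:ℤ)^m)
    (hr2 : 2 ≤ r)
    (s s' Δ : ℤ) (hΔ : Int.gcd Δ (((r:ℤ) - 1) / ((q:ℤ) - 1)) = 1) :
    (∃ k : ℕ, (s*((r:ℤ)-1)+Δ) ≡ (s'*((r:ℤ)-1)+Δ) * (q:ℤ)^k [ZMOD ((r:ℤ)^2 - 1)]) ↔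
      (((r:ℤ)+1) ∣ (s - s') ∨ ((r:ℤ)+1) ∣ (s + s' - Δ)) := by
  set d : ℤ := s*((r:ℤ)-1)+Δ with hd
  set d' : ℤ := s'*((r:ℤ)-1)+Δ with hd'
  set U : ℕ → ℤ := fun j => ∑ i ∈ range j, (q:ℤ)^i with hUdef
  have hq1 : (1:ℤ) < (q:ℤ) := by exact_mod_cast hq2
  have hqsub : ((q:ℤ) - 1) ≠ 0 := by omega
  have hr1ne : ((r:ℤ)-1) ≠ 0 := by
    have : (2:ℤ) ≤ (r:ℤ) := by exact_mod_cast hr2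
    omega
  have hU : ∀ j, U j * ((q:ℤ)-1) = (q:ℤ)^j - 1 := fun j => geom_sum_mul _ _
  have hUnonneg : ∀ j, 0 ≤ U j := fun j => Finset.sum_nonneg fun i _ => by positivity
  have hUlt : ∀ {i j : ℕ}, i < j → U i < U j := by
    intro i j hij
    apply Finset.sum_lt_sum_of_subset (Finset.range_subset_range.mpr hij.le)
      (Finset.mem_range.mpr hij) Finset.notMem_range_self (by positivity)
    intro k _ _; positivity
  have hUzero : ∀ j, U j = 0 → j = 0 := by
    intro j hj
    by_contra h
    have h1 : U 0 < U j := hUlt (Nat.pos_of_ne_zero h)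
    have h0 : U 0 = 0 := by simp [hUdef]
    omega
  have hNr : U m * ((q:ℤ) - 1) = (r:ℤ) - 1 := by rw [hU, hr]
  have hNdiv : ((r:ℤ) - 1) / ((q:ℤ) - 1) = U m := by
    rw [← hNr, Int.mul_ediv_cancel _ hqsub]
  have hcop : IsCoprime Δ (U m) := by
    rw [← Int.isCoprime_iff_gcd_eq_one] at hΔ
    rwa [hNdiv] at hΔ
  have hfac : (r:ℤ)^2 - 1 = ((r:ℤ)-1) * ((r:ℤ)+1) := by ring
  have key0 : d - d' = (s - s') * ((r:ℤ)-1) := by rw [hd, hd']; ring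
  have keym : d' * (r:ℤ) - d = ((r:ℤ)-1) * (s'*(r:ℤ) - s + Δ) := by rw [hd, hd']; ring
  have hsplit : s'*(r:ℤ) - s + Δ = s' * ((r:ℤ)+1) - (s + s' - Δ) := by ring
  constructor
  · rintro ⟨k, hk⟩
    have hq2m : ((q:ℤ))^(2*m) ≡ 1 [ZMOD ((r:ℤ)^2 - 1)] := by
      have he : ((q:ℤ))^(2*m) = (r:ℤ)^2 := by rw [hr, ← pow_mul, mul_comm]
      rw [he]
      exact Int.modEq_iff_dvd.mpr ⟨-1, by ring⟩
    set j := k % (2*m) with hjdef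
    have hj2m : j < 2*m := Nat.mod_lt _ (by omega)
    have hqkj : ((q:ℤ))^k ≡ ((q:ℤ))^j [ZMOD ((r:ℤ)^2 - 1)] := by
      conv_lhs => rw [← Nat.div_add_mod k (2*m)]
      rw [pow_add, pow_mul, ← hjdef]
      calc (((q:ℤ))^(2*m))^(k/(2*m)) * (q:ℤ)^j
          ≡ 1^(k/(2*m)) * (q:ℤ)^j [ZMOD ((r:ℤ)^2-1)] := ((hq2m.pow _).mul_right _)
        _ = (q:ℤ)^j := by ring
    have hj : d ≡ d' * (q:ℤ)^j [ZMOD ((r:ℤ)^2 - 1)] := hk.trans ((Int.ModEq.refl d').mul hqkj)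
    have hmod1 : ((r:ℤ)-1) ∣ Δ * ((q:ℤ)^j - 1) := by
      have h1 : d ≡ d' * (q:ℤ)^j [ZMOD ((r:ℤ)-1)] := hj.of_dvd ⟨(r:ℤ)+1, hfac⟩
      have h2 := h1.dvd
      have h3 : d' * (q:ℤ)^j - d = ((r:ℤ)-1)*(s'*(q:ℤ)^j - s) + Δ * ((q:ℤ)^j - 1) := by
        rw [hd, hd']; ring
      rw [h3] at h2
      exact (dvd_add_right (dvd_mul_right _ _)).mp h2
    have hNUj : U m ∣ U j := by
      have h3 : U m * ((q:ℤ)-1) ∣ (Δ * U j) * ((q:ℤ)-1) := by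
        rw [hNr]
        have h4 : Δ * U j * ((q:ℤ)-1) = Δ * ((q:ℤ)^j - 1) := by rw [mul_assoc, hU]
        rw [h4]; exact hmod1
      have h5 : U m ∣ Δ * U j := (mul_dvd_mul_iff_right hqsub).mp h3
      exact hcop.symm.dvd_of_dvd_mul_left h5
    have hj0m : j = 0 ∨ j = m := by
      rcases lt_or_ge j m with hlt | hge
      · left
        apply hUzero
        rcases LE.le.eq_or_lt' (hUnonneg j) with h | h
        · exact h
        · exfalso
          have h5 := Int.le_of_dvd h hNUj
          have h6 := hUlt hlt
          omega
      · right
        set i := j - m with hidef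
        have hji : j = m + i := by omega
        have hshift : U j = U m + (q:ℤ)^m * U i := by
          rw [hji, hUdef]
          simp only []
          rw [Finset.sum_range_add, Finset.mul_sum]
          congr 1
          exact Finset.sum_congr rfl fun x _ => by rw [pow_add]
        have hNri : U m ∣ (r:ℤ) * U i := by
          have h5 : (r:ℤ) * U i = U j - U m := by rw [hshift, hr]; ring
          rw [h5]
          exact dvd_sub hNUj dvd_rfl
        have hNUi : U m ∣ U i := by
          have hr1 : (r:ℤ) = U m * ((q:ℤ)-1) + 1 := by linarith [hNr]
          have h5 : (r:ℤ) * U i = U m * (((q:ℤ)-1) * U i) + U i := by rw [hr1]; ring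
          have h6 := hNri
          rw [h5] at h6
          exact (dvd_add_right (dvd_mul_right _ _)).mp h6
        have hi0 : i = 0 := by
          apply hUzero
          rcases LE.le.eq_or_lt' (hUnonneg i) with h | h
          · exact h
          · exfalso
            have h5 := Int.le_of_dvd h hNUi
            have h6 := hUlt (show i < m by omega)
            omega
        omega
    rcases hj0m with h0 | h0
    · left
      rw [h0, pow_zero, mul_one] at hj
      have h6 : ((r:ℤ)-1)*((r:ℤ)+1) ∣ (s - s') * ((r:ℤ)-1) := by
        rw [← key0, ← hfac]
        exact hj.symm.dvd
      have h7 : ((r:ℤ)+1) * ((r:ℤ)-1) ∣ (s - s') * ((r:ℤ)-1) := by rwa [mul_comm] at h6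
      exact (mul_dvd_mul_iff_right hr1ne).mp h7
    · right
      rw [h0] at hj
      have hqm : ((q:ℤ))^m = (r:ℤ) := hr.symm
      rw [hqm] at hj
      have h6 : ((r:ℤ)-1)*((r:ℤ)+1) ∣ ((r:ℤ)-1) * (s'*(r:ℤ) - s + Δ) := by
        rw [← keym, ← hfac]
        exact hj.dvd
      have h7 : ((r:ℤ)+1) ∣ s'*(r:ℤ) - s + Δ := (mul_dvd_mul_iff_left hr1ne).mp h6
      rw [hsplit] at h7
      simpa using dvd_sub (dvd_mul_left ((r:ℤ)+1) s') h7
  · rintro (h | h)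
    · refine ⟨0, ?_⟩
      rw [pow_zero, mul_one, Int.modEq_iff_dvd]
      obtain ⟨c, hc⟩ := h
      refine ⟨-c, ?_⟩
      calc d' - d = -((s - s')*((r:ℤ)-1)) := by rw [← key0]; ring
        _ = ((r:ℤ)^2 - 1) * (-c) := by rw [hc]; ring
    · refine ⟨m, ?_⟩
      have hqm : ((q:ℤ))^m = (r:ℤ) := hr.symm
      rw [hqm, Int.modEq_iff_dvd]
      obtain ⟨c, hc⟩ := h
      refine ⟨s' - c, ?_⟩
      calc d' * (r:ℤ) - d = ((r:ℤ)-1)*(s'*(r:ℤ) - s + Δ) := keym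
        _ = ((r:ℤ)^2 - 1)*(s' - c) := by rw [hsplit, hc]; ring

/-- With `r = q^m`, `γ` a primitive element of `GF(r²)`,
`d = s(r-1) + Δ`, `d' = s'(r-1) + Δ` and `gcd(Δ, (r-1)/(q-1)) = 1`,
the elements `γ^{-d}` and `γ^{-d'}` have the same minimal polynomial over
`GF(q)` iff `s ≡ s' (mod r+1)` or `s + s' ≡ Δ (mod r+1)`. -/
theorem stmt3 (p l q m r : ℕ) (hp : p.Prime) (hl : 1 ≤ l) (hq : q = p ^ l)
    (hm : 1 ≤ m) (hr : r = q ^ m)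
    (K L : Type) [Field K] [Field L] [Fintype K] [Fintype L] [Algebra K L]
    (hK : Fintype.card K = q) (hL : Fintype.card L = r ^ 2)
    (γ : Lˣ) (hγ : orderOf γ = r ^ 2 - 1)
    (s s' Δ d d' : ℤ) (hΔ : Int.gcd Δ ((r - 1) / (q - 1)) = 1)
    (hd : d = s * ((r : ℤ) - 1) + Δ) (hd' : d' = s' * ((r : ℤ) - 1) + Δ) :
    minpoly K ((γ ^ (-d) : Lˣ) : L) = minpoly K ((γ ^ (-d') : Lˣ) : L) ↔
      ((s : ZMod (r + 1)) = (s' : ZMod (r + 1)) ∨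
        (s : ZMod (r + 1)) + (s' : ZMod (r + 1)) = (Δ : ZMod (r + 1))) := by
  have hq2 : 2 ≤ q := by
    rw [hq]; exact Nat.one_lt_pow (by omega) hp.two_le
  have hr2 : 2 ≤ r := by
    rw [hr]; exact le_trans hq2 (Nat.le_self_pow (by omega) q)
  have hrcast : (r:ℤ) = (q:ℤ)^m := by exact_mod_cast congrArg (Nat.cast : ℕ → ℤ) hr
  have hcastM : ((r^2 - 1 : ℕ) : ℤ) = (r:ℤ)^2 - 1 := by
    have h1 : 1 ≤ r^2 := by nlinarith
    push_cast [Nat.cast_sub h1]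
    ring
  -- Step 1: translate minpoly equality into a power condition
  rw [minpoly_eq_iff_pow K L, hK]
  -- Step 2: per-k equivalence with a congruence
  have hstep : ∀ k : ℕ, (((γ ^ (-d) : Lˣ) : L) = (((γ ^ (-d') : Lˣ) : L)) ^ q ^ k) ↔
      (d ≡ d' * (q:ℤ)^k [ZMOD ((r:ℤ)^2 - 1)]) := by
    intro k
    rw [← Units.val_pow_eq_pow_val, ← Units.ext_iff, ← zpow_natCast, ← zpow_mul,
      zpow_eq_zpow_iff_modEq, hγ]
    have hcast2 : ((q^k : ℕ) : ℤ) = (q:ℤ)^k := by push_cast; ring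
    rw [hcastM, hcast2]
    constructor
    · intro h
      have := h.neg
      simpa [neg_mul, neg_neg] using this
    · intro h
      have := h.neg
      simpa [neg_mul, neg_neg] using this
  have h3 : (∃ k : ℕ, (((γ ^ (-d) : Lˣ) : L) = (((γ ^ (-d') : Lˣ) : L)) ^ q ^ k)) ↔
      (∃ k : ℕ, d ≡ d' * (q:ℤ)^k [ZMOD ((r:ℤ)^2 - 1)]) :=
    exists_congr hstep
  rw [h3, hd, hd']
  rw [numth q m r hq2 hm hrcast hr2 s s' Δ hΔ]
  -- Step 3: translate divisibility into ZMod equalities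
  have hc1 : ((s : ZMod (r + 1)) = (s' : ZMod (r + 1))) ↔ ((r:ℤ)+1) ∣ (s - s') := by
    rw [ZMod.intCast_eq_intCast_iff, Int.modEq_iff_dvd, dvd_sub_comm]
    norm_cast
  have hc2 : ((s : ZMod (r + 1)) + (s' : ZMod (r + 1)) = (Δ : ZMod (r + 1))) ↔
      ((r:ℤ)+1) ∣ (s + s' - Δ) := by
    have he : ((s : ZMod (r+1)) + (s' : ZMod (r+1))) = ((s + s' : ℤ) : ZMod (r+1)) := by
      push_cast; ring
    rw [he, ZMod.intCast_eq_intCast_iff, Int.modEq_iff_dvd, dvd_sub_comm]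
    norm_cast
  rw [hc1, hc2]
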